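/- Given an SDR and a small perturbation δ of it, the perturbed maps admit the following closed-form expressions: i₁ = (1 − Kδ)⁻¹∘i, p₁ = p∘(1 − δK)⁻¹, K₁ = (1 − Kδ)⁻¹∘K = K∘(1 − δK)⁻¹, and b₁ = b + p₁∘δ∘i = b + p∘δ∘i₁ = p₁∘d₁∘i = p∘d₁∘i₁. -/

import Mathlib

open LinearMap

/-- Closed-form expressions for the data of the homological perturbation lemma:
`i₁ = (1 - Kδ)⁻¹ i`, `p₁ = p (1 - δK)⁻¹`, `K₁ = (1 - Kδ)⁻¹ K = K (1 - δK)⁻¹` and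
`b₁ = b + p₁ δ i = b + p δ i₁ = p₁ d₁ i = p d₁ i₁`.
Here `E` is the (two-sided) inverse of `1 - δ ∘ K` and `E'` that of `1 - K ∘ δ`. -/
theorem perturbation_closed_forms
    {R N M : Type*} [CommRing R] [AddCommGroup N] [Module R N]
    [AddCommGroup M] [Module R M]
    -- the SDR
    (b : Module.End R N) (d : Module.End R M)
    (i : N →ₗ[R] M) (p : M →ₗ[R] N) (K : Module.End R M)
    (hb : b ∘ₗ b = 0) (hd : d ∘ₗ d = 0)
    (hdi : d ∘ₗ i = i ∘ₗ b) (hbp : b ∘ₗ p = p ∘ₗ d)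
    (hpi : p ∘ₗ i = LinearMap.id)
    (hip : i ∘ₗ p = LinearMap.id + d ∘ₗ K + K ∘ₗ d)
    (hpK : p ∘ₗ K = 0) (hKi : K ∘ₗ i = 0) (hKK : K ∘ₗ K = 0)
    -- a small perturbation
    (δ : Module.End R M) (hδ : (d + δ) ∘ₗ (d + δ) = 0)
    (E : Module.End R M)
    (hE₁ : (1 - δ ∘ₗ K) ∘ₗ E = 1) (hE₂ : E ∘ₗ (1 - δ ∘ₗ K) = 1)
    (E' : Module.End R M)
    (hE'₁ : (1 - K ∘ₗ δ) ∘ₗ E' = 1) (hE'₂ : E' ∘ₗ (1 - K ∘ₗ δ) = 1)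
    -- the perturbed data
    (A : Module.End R M) (hA : A = E ∘ₗ δ)
    (b₁ : Module.End R N) (hb₁ : b₁ = b + p ∘ₗ (A ∘ₗ i))
    (i₁ : N →ₗ[R] M) (hi₁ : i₁ = i + K ∘ₗ (A ∘ₗ i))
    (p₁ : M →ₗ[R] N) (hp₁ : p₁ = p + p ∘ₗ (A ∘ₗ K))
    (K₁ : Module.End R M) (hK₁ : K₁ = K + K ∘ₗ (A ∘ₗ K))
    (d₁ : Module.End R M) (hd₁ : d₁ = d + δ) :
    i₁ = E' ∘ₗ i ∧
    p₁ = p ∘ₗ E ∧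
    K₁ = E' ∘ₗ K ∧
    K₁ = K ∘ₗ E ∧
    b₁ = b + p₁ ∘ₗ (δ ∘ₗ i) ∧
    b₁ = b + p ∘ₗ (δ ∘ₗ i₁) ∧
    b₁ = p₁ ∘ₗ (d₁ ∘ₗ i) ∧
    b₁ = p ∘ₗ (d₁ ∘ₗ i₁) := by
  -- A = δ + δ K A
  have hA2 : A = δ + δ ∘ₗ (K ∘ₗ A) := by
    have h : (1 - δ ∘ₗ K) ∘ₗ A = δ := by
      rw [hA, ← comp_assoc, hE₁, Module.End.one_eq_id, id_comp]
    rw [sub_comp, Module.End.one_eq_id, id_comp, comp_assoc] at h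
    exact sub_eq_iff_eq_add.mp h
  -- E = 1 + A K
  have hEeq : E = 1 + A ∘ₗ K := by
    have h := hE₂
    rw [comp_sub, Module.End.one_eq_id, comp_id, ← comp_assoc, ← hA] at h
    rw [Module.End.one_eq_id]
    exact sub_eq_iff_eq_add.mp h
  -- E' = 1 + K A
  have hE'eq : E' = 1 + K ∘ₗ A := by
    have h1 : (1 - K ∘ₗ δ) ∘ₗ (1 + K ∘ₗ A) = 1 := by
      simp only [sub_comp, comp_add, Module.End.one_eq_id, id_comp, comp_id, comp_assoc]
      nth_rewrite 1 [hA2]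
      simp only [comp_add, comp_assoc]
      abel
    calc E' = E' ∘ₗ ((1 - K ∘ₗ δ) ∘ₗ (1 + K ∘ₗ A)) := by
            rw [h1, Module.End.one_eq_id, comp_id]
      _ = (E' ∘ₗ (1 - K ∘ₗ δ)) ∘ₗ (1 + K ∘ₗ A) := (comp_assoc _ _ _).symm
      _ = 1 + K ∘ₗ A := by rw [hE'₂, Module.End.one_eq_id, id_comp]
  -- A = δ E'
  have hA3 : A = δ ∘ₗ E' := by
    rw [hE'eq, comp_add, Module.End.one_eq_id, comp_id, ← comp_assoc]
    rw [comp_assoc]; exact hA2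
  -- A = δ + A K δ
  have hA4 : A = δ + A ∘ₗ (K ∘ₗ δ) := by
    calc A = (1 + A ∘ₗ K) ∘ₗ δ := by rw [← hEeq, ← hA]
      _ = δ + A ∘ₗ (K ∘ₗ δ) := by
          rw [add_comp, Module.End.one_eq_id, id_comp, comp_assoc]
  -- map-level goals 1-4
  have g1 : i₁ = E' ∘ₗ i := by
    rw [hi₁, hE'eq, add_comp, Module.End.one_eq_id, id_comp, comp_assoc]
  have g2 : p₁ = p ∘ₗ E := by
    rw [hp₁, hEeq, comp_add, Module.End.one_eq_id, comp_id]
  have g3 : K₁ = E' ∘ₗ K := by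
    rw [hK₁, hE'eq, add_comp, Module.End.one_eq_id, id_comp, comp_assoc]
  have g4 : K₁ = K ∘ₗ E := by
    rw [hK₁, hEeq, comp_add, Module.End.one_eq_id, comp_id]
  -- pointwise versions of the hypotheses
  have Hpi : ∀ x, p (i x) = x := fun x => DFunLike.congr_fun hpi x
  have HpK : ∀ m, p (K m) = 0 := fun m => DFunLike.congr_fun hpK m
  have HKi : ∀ x, K (i x) = 0 := fun x => DFunLike.congr_fun hKi x
  have Hdi : ∀ x, d (i x) = i (b x) := fun x => DFunLike.congr_fun hdi x
  have HKd : ∀ m, K (d m) = i (p m) - m - d (K m) := by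
    intro m
    have := DFunLike.congr_fun hip m
    simp only [comp_apply, LinearMap.add_apply, id_apply] at this
    rw [this]; abel
  have HdK : ∀ m, d (K m) = i (p m) - m - K (d m) := by
    intro m
    have := DFunLike.congr_fun hip m
    simp only [comp_apply, LinearMap.add_apply, id_apply] at this
    rw [this]; abel
  have HA2 : ∀ m, A m = δ m + δ (K (A m)) := by
    intro m; have := DFunLike.congr_fun hA2 m
    simpa using this
  have HA4 : ∀ m, A m = δ m + A (K (δ m)) := by
    intro m; have := DFunLike.congr_fun hA4 m
    simpa using this
  refine ⟨g1, g2, g3, g4, ?_, ?_, ?_, ?_⟩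
  · -- b₁ = b + p₁ δ i
    rw [hb₁, g2]
    simp only [hA, comp_assoc]
  · -- b₁ = b + p δ i₁
    rw [hb₁, g1, hA3]
    simp only [comp_assoc]
  · -- b₁ = p₁ d₁ i
    rw [hb₁, hp₁, hd₁]
    ext x
    simp only [comp_apply, LinearMap.add_apply, add_comp, comp_add]
    rw [HA4 (i x)]
    have hKdi : K (d (i x)) = 0 := by
      rw [HKd, Hpi, HKi]; simp
    simp only [map_add, hKdi, map_zero, Hdi, Hpi, HKi, add_zero]
  · -- b₁ = p d₁ i₁
    rw [hb₁, hi₁, hd₁]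
    ext x
    simp only [comp_apply, LinearMap.add_apply, add_comp, comp_add]
    nth_rewrite 1 [HA2 (i x)]
    have hpdK : ∀ m, p (d (K m)) = 0 := by
      intro m; rw [HdK]; simp [Hpi, HpK]
    simp only [map_add, hpdK, Hdi, Hpi, HpK, map_zero]
    abel
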